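/- For m ≥ 5, the 3-percolation number of the grid P₅ □ Pₘ is at least 2m + 2. -/

import Mathlib

open SimpleGraph

/-- The set of vertices eventually infected in `r`-neighbor bootstrap percolation
on the graph `G`, starting from the initially infected set `A`. -/
inductive Infected {V : Type*} (G : SimpleGraph V) (r : ℕ) (A : Set V) : V → Prop
  | init {v : V} : v ∈ A → Infected G r A v
  | step {v : V} (T : Finset V) : r ≤ T.card → (∀ u ∈ T, G.Adj u v) →
      (∀ u ∈ T, Infected G r A u) → Infected G r A v

/-- `A` is an `r`-percolating set of `G`. -/
def Percolates {V : Type*} (G : SimpleGraph V) (r : ℕ) (A : Set V) : Prop :=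
  ∀ v, Infected G r A v

/-- The `r`-percolation number of `G`: minimum size of an `r`-percolating set. -/
noncomputable def percNum (V : Type*) [Fintype V] (G : SimpleGraph V) (r : ℕ) : ℕ :=
  sInf {k | ∃ A : Finset V, A.card = k ∧ Percolates G r (↑A)}

/-- The `n × m` grid graph `Pₙ □ Pₘ`. -/
def gridGraph (n m : ℕ) : SimpleGraph (Fin n × Fin m) :=
  (pathGraph n) □ (pathGraph m)

/-- A boundary vertex of a grid: degree at most 3. -/
def IsBoundary {V : Type*} (G : SimpleGraph V) (v : V) : Prop :=
  (G.neighborSet v).ncard ≤ 3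

open Finset

instance pathAdjDec (n : ℕ) : DecidableRel (pathGraph n).Adj := fun u v =>
  decidable_of_iff _ pathGraph_adj.symm

lemma gridGraph_adj {n m : ℕ} {a b : Fin n × Fin m} :
    (gridGraph n m).Adj a b ↔
      ((pathGraph n).Adj a.1 b.1 ∧ a.2 = b.2) ∨ ((pathGraph m).Adj a.2 b.2 ∧ a.1 = b.1) := by
  constructor
  · intro h
    have h' : ((pathGraph n) □ (pathGraph m)).Adj a b := h
    rwa [boxProd_adj] at h'
  · intro h
    show ((pathGraph n) □ (pathGraph m)).Adj a b
    rwa [boxProd_adj]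

instance gridAdjDec (n m : ℕ) : DecidableRel (gridGraph n m).Adj := fun a b =>
  decidable_of_iff _ gridGraph_adj.symm

section Aux

variable {V : Type*} [Fintype V] [DecidableEq V] (G : SimpleGraph V) [DecidableRel G.Adj]

/-- The potential `4|S| - 2 e(S)`. -/
def phiP (S : Finset V) : ℤ :=
  4 * S.card - ∑ v ∈ S, ((S.filter (G.Adj v)).card : ℤ)

/-- One round of 3-neighbour bootstrap percolation. -/
def nextF (S : Finset V) : Finset V :=
  S ∪ univ.filter (fun v => 3 ≤ (S.filter (fun u => G.Adj u v)).card)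

variable {G}

lemma subset_nextF (S : Finset V) : S ⊆ nextF G S := subset_union_left

lemma iterate_subset {A : Finset V} {n n' : ℕ} (h : n ≤ n') :
    (nextF G)^[n] A ⊆ (nextF G)^[n'] A := by
  induction h with
  | refl => exact subset_rfl
  | step _ ih =>
    refine ih.trans ?_
    rw [Function.iterate_succ_apply']
    exact subset_nextF _

lemma infected_mem_iterate {A : Finset V} {v : V} (h : Infected G 3 ↑A v) :
    ∃ n, v ∈ (nextF G)^[n] A := by
  induction h with
  | init hv => exact ⟨0, by simpa using hv⟩
  | @step v T hcard hadj hinf ih =>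
    choose f hf using ih
    refine ⟨T.attach.sup (fun u => f u.1 u.2) + 1, ?_⟩
    rw [Function.iterate_succ_apply']
    apply mem_union_right
    rw [mem_filter]
    refine ⟨mem_univ _, le_trans hcard ?_⟩
    apply card_le_card
    intro u hu
    rw [mem_filter]
    exact ⟨iterate_subset (Finset.le_sup (mem_attach _ ⟨u, hu⟩)) (hf u hu), hadj u hu⟩

lemma perc_iterate_univ {A : Finset V} (h : Percolates G 3 ↑A) :
    ∃ n, (nextF G)^[n] A = univ := by
  choose f hf using fun v => infected_mem_iterate (h v)
  exact ⟨univ.sup f, eq_univ_iff_forall.2 fun v =>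
    iterate_subset (Finset.le_sup (mem_univ v)) (hf v)⟩

lemma double_count (S N : Finset V) :
    ∑ v ∈ S, (N.filter (G.Adj v)).card = ∑ u ∈ N, (S.filter (fun x => G.Adj x u)).card := by
  simp_rw [card_filter]
  exact Finset.sum_comm

lemma phi_step {S S' : Finset V} (hsub : S ⊆ S')
    (h : ∀ v ∈ S' \ S, 3 ≤ ((S.filter (fun u => G.Adj u v)).card)) :
    phiP G S' ≤ phiP G S - 2 * ((S'.card : ℤ) - S.card) := by
  set N := S' \ S with hN
  have hdisj : Disjoint S N := disjoint_sdiff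
  have hunion : S ∪ N = S' := union_sdiff_of_subset hsub
  have hcard : S.card + N.card = S'.card := by
    rw [← hunion, card_union_of_disjoint hdisj]
  have key : ∑ v ∈ S, (S.filter (G.Adj v)).card + 6 * N.card
      ≤ ∑ v ∈ S', (S'.filter (G.Adj v)).card := by
    rw [← hunion, sum_union hdisj]
    have e1 : ∑ v ∈ S, ((S ∪ N).filter (G.Adj v)).card
        = ∑ v ∈ S, (S.filter (G.Adj v)).card + ∑ v ∈ S, (N.filter (G.Adj v)).card := by
      rw [← sum_add_distrib]
      refine sum_congr rfl fun v _ => ?_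
      rw [filter_union, card_union_of_disjoint (hdisj.mono (filter_subset _ _) (filter_subset _ _))]
    have e2 : ∑ v ∈ S, (N.filter (G.Adj v)).card
        = ∑ u ∈ N, (S.filter (fun x => G.Adj x u)).card := double_count S N
    have e3 : 3 * N.card ≤ ∑ u ∈ N, (S.filter (fun x => G.Adj x u)).card := by
      rw [mul_comm, ← smul_eq_mul, ← sum_const]
      exact sum_le_sum fun u hu => h u hu
    have e4 : 3 * N.card ≤ ∑ v ∈ N, ((S ∪ N).filter (G.Adj v)).card := by
      rw [mul_comm, ← smul_eq_mul, ← sum_const]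
      refine sum_le_sum fun v hv => ?_
      refine le_trans (h v hv) (card_le_card ?_)
      intro u hu
      rw [mem_filter] at hu ⊢
      exact ⟨mem_union_left _ hu.1, hu.2.symm⟩
    omega
  have keyZ : (∑ v ∈ S, ((S.filter (G.Adj v)).card : ℤ)) + 6 * N.card
      ≤ ∑ v ∈ S', ((S'.filter (G.Adj v)).card : ℤ) := by
    have := key
    push_cast [← Nat.cast_sum]
    exact_mod_cast key
  have hcardZ : (S.card : ℤ) + N.card = S'.card := by exact_mod_cast hcard
  unfold phiP
  linarith

lemma phi_iterate (A : Finset V) (n : ℕ) :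
    phiP G ((nextF G)^[n] A) ≤ phiP G A - 2 * ((((nextF G)^[n] A).card : ℤ) - A.card) := by
  induction n with
  | zero => simp
  | succ n ih =>
    rw [Function.iterate_succ_apply']
    set S := (nextF G)^[n] A with hS
    have hstep : phiP G (nextF G S) ≤ phiP G S - 2 * (((nextF G S).card : ℤ) - S.card) := by
      refine phi_step (subset_nextF S) fun v hv => ?_
      rw [mem_sdiff] at hv
      obtain ⟨hv1, hv2⟩ := hv
      rcases mem_union.1 hv1 with h | h
      · exact absurd h hv2
      · exact (mem_filter.1 h).2
    have hmono : (S.card : ℤ) ≤ (nextF G S).card := by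
      exact_mod_cast card_le_card (subset_nextF S)
    linarith

lemma phi_A_le (A : Finset V) : phiP G A ≤ 4 * A.card := by
  unfold phiP
  have : (0 : ℤ) ≤ ∑ v ∈ A, ((A.filter (G.Adj v)).card : ℤ) :=
    sum_nonneg fun v _ => by positivity
  linarith

lemma perc_phi_bound {A : Finset V} (h : Percolates G 3 ↑A) :
    phiP G (univ : Finset V) ≤ 4 * A.card - 2 * ((Fintype.card V : ℤ) - A.card) := by
  obtain ⟨n, hn⟩ := perc_iterate_univ h
  have h1 := phi_iterate (G := G) A n
  rw [hn, card_univ] at h1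
  have h2 := phi_A_le (G := G) A
  linarith

end Aux

lemma path_deg_sum (n : ℕ) :
    ∑ i : Fin n, (univ.filter ((pathGraph n).Adj i)).card ≤ (n - 1) + (n - 1) := by
  have e : ∑ i : Fin n, (univ.filter ((pathGraph n).Adj i)).card
      = ((univ ×ˢ univ).filter fun p : Fin n × Fin n => (pathGraph n).Adj p.1 p.2).card := by
    rw [card_filter, sum_product]
    simp_rw [card_filter]
  rw [e]
  have hsub : ((univ ×ˢ univ).filter fun p : Fin n × Fin n => (pathGraph n).Adj p.1 p.2)
      ⊆ ((univ ×ˢ univ).filter fun p : Fin n × Fin n => p.1.val + 1 = p.2.val)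
        ∪ ((univ ×ˢ univ).filter fun p : Fin n × Fin n => p.2.val + 1 = p.1.val) := by
    intro p hp
    simp only [mem_filter, mem_union, pathGraph_adj] at *
    tauto
  refine le_trans (card_le_card hsub) (le_trans (card_union_le _ _) (Nat.add_le_add ?_ ?_))
  · calc ((univ ×ˢ univ).filter fun p : Fin n × Fin n => p.1.val + 1 = p.2.val).card
        ≤ (Finset.range (n - 1)).card := by
          refine card_le_card_of_injOn (fun p => p.1.val) ?_ ?_
          · intro p hp
            simp only [mem_coe, mem_filter] at hp
            have := p.2.isLt
            simp only [mem_coe, mem_range]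
            omega
          · intro p hp q hq hpq
            simp only [mem_filter, coe_filter, Set.mem_setOf_eq] at hp hq
            simp only at hpq
            have h1 : p.1 = q.1 := Fin.ext hpq
            have h2 : p.2 = q.2 := Fin.ext (by omega)
            exact Prod.ext h1 h2
      _ = n - 1 := card_range _
  · calc ((univ ×ˢ univ).filter fun p : Fin n × Fin n => p.2.val + 1 = p.1.val).card
        ≤ (Finset.range (n - 1)).card := by
          refine card_le_card_of_injOn (fun p => p.2.val) ?_ ?_
          · intro p hp
            simp only [mem_coe, mem_filter] at hp
            have := p.1.isLt
            simp only [mem_coe, mem_range]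
            omega
          · intro p hp q hq hpq
            simp only [mem_filter, coe_filter, Set.mem_setOf_eq] at hp hq
            simp only at hpq
            have h2 : p.2 = q.2 := Fin.ext hpq
            have h1 : p.1 = q.1 := Fin.ext (by omega)
            exact Prod.ext h1 h2
      _ = n - 1 := card_range _

lemma grid_deg_le (m : ℕ) (v : Fin 5 × Fin m) :
    (univ.filter ((gridGraph 5 m).Adj v)).card ≤
      (univ.filter ((pathGraph 5).Adj v.1)).card + (univ.filter ((pathGraph m).Adj v.2)).card := by
  have hsub : univ.filter ((gridGraph 5 m).Adj v) ⊆
      ((univ.filter ((pathGraph 5).Adj v.1)) ×ˢ {v.2}) ∪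
        (({v.1} : Finset (Fin 5)) ×ˢ (univ.filter ((pathGraph m).Adj v.2))) := by
    intro w hw
    rw [mem_filter] at hw
    have hadj := gridGraph_adj.1 hw.2
    rw [mem_union, mem_product, mem_product, mem_singleton, mem_singleton]
    rcases hadj with ⟨h1, h2⟩ | ⟨h1, h2⟩
    · exact Or.inl ⟨mem_filter.2 ⟨mem_univ _, h1⟩, h2.symm⟩
    · exact Or.inr ⟨h2.symm, mem_filter.2 ⟨mem_univ _, h1⟩⟩
  refine le_trans (card_le_card hsub) (le_trans (card_union_le _ _) ?_)
  simp only [card_product, card_singleton]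
  omega

lemma grid_w_le (m : ℕ) :
    ∑ v : Fin 5 × Fin m, (univ.filter ((gridGraph 5 m).Adj v)).card
      ≤ 8 * m + 10 * (m - 1) := by
  have h1 : ∑ v : Fin 5 × Fin m, (univ.filter ((gridGraph 5 m).Adj v)).card
      ≤ ∑ v : Fin 5 × Fin m, ((univ.filter ((pathGraph 5).Adj v.1)).card
          + (univ.filter ((pathGraph m).Adj v.2)).card) :=
    sum_le_sum fun v _ => grid_deg_le m v
  refine le_trans h1 ?_
  rw [Fintype.sum_prod_type]
  have e : ∀ i : Fin 5, ∑ j : Fin m, ((univ.filter ((pathGraph 5).Adj i)).card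
      + (univ.filter ((pathGraph m).Adj j)).card)
      = m * (univ.filter ((pathGraph 5).Adj i)).card
        + ∑ j : Fin m, (univ.filter ((pathGraph m).Adj j)).card := by
    intro i
    rw [sum_add_distrib, sum_const, card_univ, Fintype.card_fin, smul_eq_mul]
  simp_rw [e]
  rw [sum_add_distrib, sum_const, card_univ, Fintype.card_fin, smul_eq_mul, ← mul_sum]
  have h5 := path_deg_sum 5
  have hm := path_deg_sum m
  have h5' : ∑ i : Fin 5, (univ.filter ((pathGraph 5).Adj i)).card ≤ 8 := h5
  nlinarith [Nat.sub_le m 1]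

theorem stmt_13 (m : ℕ) (hm : 5 ≤ m) :
    2 * m + 2 ≤ percNum (Fin 5 × Fin m) (gridGraph 5 m) 3 := by
  have hne : {k | ∃ A : Finset (Fin 5 × Fin m), A.card = k
      ∧ Percolates (gridGraph 5 m) 3 ↑A}.Nonempty :=
    ⟨(univ : Finset (Fin 5 × Fin m)).card, univ, rfl, fun v => Infected.init (by simp)⟩
  refine le_csInf hne ?_
  rintro k ⟨A, rfl, hA⟩
  have h1 := perc_phi_bound (G := gridGraph 5 m) hA
  have hcV : Fintype.card (Fin 5 × Fin m) = 5 * m := by simp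
  rw [hcV] at h1
  -- lower bound on phiP univ
  have hW := grid_w_le m
  have h2 : (2 * (m : ℤ) + 10) ≤ phiP (gridGraph 5 m) (univ : Finset (Fin 5 × Fin m)) := by
    unfold phiP
    rw [card_univ, hcV]
    have hcast : ∑ v ∈ (univ : Finset (Fin 5 × Fin m)), ((univ.filter ((gridGraph 5 m).Adj v)).card : ℤ)
        = ((∑ v : Fin 5 × Fin m, (univ.filter ((gridGraph 5 m).Adj v)).card : ℕ) : ℤ) := by
      push_cast
      rfl
    rw [hcast]
    have : (∑ v : Fin 5 × Fin m, (univ.filter ((gridGraph 5 m).Adj v)).card : ℕ) ≤ 18 * m - 10 := by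
      omega
    have hZ : ((∑ v : Fin 5 × Fin m, (univ.filter ((gridGraph 5 m).Adj v)).card : ℕ) : ℤ)
        ≤ 18 * (m : ℤ) - 10 := by
      omega
    push_cast
    linarith
  push_cast at h1
  have h3 : 12 * (m : ℤ) + 10 ≤ 6 * (A.card : ℤ) := by linarith
  omega
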